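/- Let p ≥ 3 be prime and a ∈ ℚ_p with 0 < |a|_p < 1, such that -a is not a square in ℚ_p. Let v = v_p(a) be the p-adic valuation of a (so v > 0). Then for every x ∈ ℚ_p with p^{-⌊v/2⌋} ≤ |x|_p ≤ p^{⌊v/2⌋}, one has |a·x + 1/x|_p = 1/|x|_p. -/

import Mathlib

theorem stmt8 (p : ℕ) [Fact p.Prime] (hp : 3 ≤ p) (a : ℚ_[p])
    (ha0 : 0 < ‖a‖) (ha1 : ‖a‖ < 1)
    (hsq : ¬ ∃ c : ℚ_[p], c ^ 2 = -a)
    (x : ℚ_[p])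
    (hx1 : (p : ℝ) ^ (-(a.valuation / 2)) ≤ ‖x‖)
    (hx2 : ‖x‖ ≤ (p : ℝ) ^ (a.valuation / 2)) :
    ‖a * x + 1 / x‖ = 1 / ‖x‖ := by
  have hpR : (1 : ℝ) < (p : ℝ) := by
    exact_mod_cast lt_of_lt_of_le (by norm_num) hp
  have hxpos : 0 < ‖x‖ := lt_of_lt_of_le (zpow_pos (by linarith) _) hx1
  have hx0 : x ≠ 0 := fun h => by simp [h] at hxpos
  have ha : a ≠ 0 := fun h => by simp [h] at ha0
  have hna : ‖a‖ = (p : ℝ) ^ (-a.valuation) := Padic.norm_eq_zpow_neg_valuation ha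
  set v : ℤ := a.valuation with hv
  -- key bound: ‖a‖ * ‖x‖^2 ≤ 1
  have hle1 : ‖a‖ * ‖x‖ ^ 2 ≤ 1 := by
    have h2 : ‖x‖ ^ 2 ≤ ((p : ℝ) ^ (v / 2)) ^ 2 :=
      pow_le_pow_left₀ (le_of_lt hxpos) hx2 2
    have h3 : ((p : ℝ) ^ (v / 2)) ^ 2 = (p : ℝ) ^ (v / 2 * 2) := by
      rw [← zpow_natCast ((p : ℝ) ^ (v / 2)) 2, ← zpow_mul]; norm_num
    calc ‖a‖ * ‖x‖ ^ 2 ≤ (p : ℝ) ^ (-v) * (p : ℝ) ^ (v / 2 * 2) := by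
          rw [← h3, hna]
          exact mul_le_mul_of_nonneg_left h2 (le_of_lt (zpow_pos (by linarith) _))
      _ = (p : ℝ) ^ (-v + v / 2 * 2) := (zpow_add₀ (by linarith) _ _).symm
      _ ≤ (p : ℝ) ^ (0 : ℤ) := zpow_le_zpow_right₀ (le_of_lt hpR) (by omega)
      _ = 1 := zpow_zero _
  rcases lt_or_eq_of_le hle1 with hlt | heq
  · -- ‖a x‖ < ‖1/x‖, ultrametric
    have hlt' : ‖a * x‖ < ‖1 / x‖ := by
      rw [norm_mul, norm_div, norm_one, lt_div_iff₀ hxpos]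
      nlinarith
    rw [Padic.add_eq_max_of_ne (ne_of_lt hlt'), norm_div, norm_one]
    rw [norm_div, norm_one] at hlt'
    exact max_eq_right (le_of_lt hlt')
  · -- ‖a‖ * ‖x‖^2 = 1 : show ‖a x^2 + 1‖ = 1 using Hensel / non-square
    have hax2 : ‖a * x ^ 2‖ = 1 := by rw [norm_mul, norm_pow]; exact heq
    have hkey : ‖a * x ^ 2 + 1‖ = 1 := by
      have hle : ‖a * x ^ 2 + 1‖ ≤ 1 := by
        calc ‖a * x ^ 2 + 1‖ ≤ max ‖a * x ^ 2‖ ‖(1 : ℚ_[p])‖ := Padic.nonarchimedean _ _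
          _ ≤ 1 := by rw [hax2, norm_one]; simp
      rcases lt_or_eq_of_le hle with hlt1 | h; swap
      · exact h
      exfalso
      -- Hensel: -(a x^2) is a square
      set u : ℚ_[p] := -(a * x ^ 2) with hu
      have hun : ‖u‖ ≤ 1 := by rw [hu, norm_neg, hax2]
      set U : ℤ_[p] := ⟨u, hun⟩ with hU
      set F : Polynomial ℤ_[p] := Polynomial.X ^ 2 - Polynomial.C U with hF
      have hd : F.derivative.eval 1 = 2 := by
        simp [hF, Polynomial.derivative_sub, Polynomial.derivative_pow]
      have hd1 : ‖F.derivative.eval 1‖ = 1 := by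
        rw [hd]
        have h2 : ¬ ((p : ℤ) ∣ 2) := by
          intro h
          have := Int.le_of_dvd (by norm_num) h
          omega
        have := (PadicInt.norm_int_lt_one_iff_dvd (p := p) 2).not.mpr h2
        push_neg at this
        have hle2 : ‖(2 : ℤ_[p])‖ ≤ 1 := PadicInt.norm_le_one _
        exact le_antisymm hle2 (by exact_mod_cast this)
      have hev : F.eval 1 = 1 - U := by simp [hF]
      have hnorm : ‖F.eval 1‖ < ‖F.derivative.eval 1‖ ^ 2 := by
        rw [hd1, one_pow, hev]
        have : ((1 - U : ℤ_[p]) : ℚ_[p]) = a * x ^ 2 + 1 := by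
          rw [PadicInt.coe_sub, PadicInt.coe_one]; show (1 : ℚ_[p]) - u = _; rw [hu]; ring
        rw [← PadicInt.padic_norm_e_of_padicInt, this]
        exact hlt1
      obtain ⟨z, hz, -⟩ := hensels_lemma hnorm
      have hz2 : (z : ℚ_[p]) ^ 2 = u := by
        have : z ^ 2 = U := by
          have := hz
          simp [hF, sub_eq_zero] at this
          exact this
        calc (z : ℚ_[p]) ^ 2 = ((z ^ 2 : ℤ_[p]) : ℚ_[p]) := by push_cast; ring
          _ = (U : ℚ_[p]) := by rw [this]
          _ = u := rfl
      apply hsq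
      refine ⟨(z : ℚ_[p]) * x⁻¹, ?_⟩
      rw [mul_pow, hz2, hu]
      field_simp
    have hrw : a * x + 1 / x = (a * x ^ 2 + 1) * x⁻¹ := by field_simp
    rw [hrw, norm_mul, hkey, one_mul, norm_inv, one_div]
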